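/- arXiv:2209.14475 — 5 statements merged into one kernel-verified Lean document; each statement's English description precedes it below -/
import Mathlib

section
/- Let H be a real inner product space, let q, x, v ∈ H with x ≠ v, let r > 0, and define φ(t) = (t/r)·q + (1 − t/r)·x. Suppose ‖q − x‖ = r and ⟨q − x, v − x⟩ > 0. Then t* = r·‖v − x‖² / (2·⟨q − x, v − x⟩) is the unique real number t satisfying t = ‖φ(t) − v‖. -/
open scoped RealInnerProductSpace

private lemma adjusted_key
    {H : Type*} [NormedAddCommGroup H] [InnerProductSpace ℝ H]
    (q x v : H) (r : ℝ) (hr : 0 < r)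
    (hqx : ‖q - x‖ = r) (t : ℝ) :
    ‖(t / r) • q + (1 - t / r) • x - v‖ ^ 2
      = t ^ 2 - 2 * t * ⟪q - x, v - x⟫ / r + ‖v - x‖ ^ 2 := by
  have hE : (t / r) • q + (1 - t / r) • x - v = (t / r) • (q - x) + (x - v) := by
    module
  rw [hE, norm_add_sq_real, norm_smul, real_inner_smul_left]
  have h1 : ⟪q - x, x - v⟫ = -⟪q - x, v - x⟫ := by
    rw [← inner_neg_right]; congr 1; abel
  have h2 : ‖x - v‖ = ‖v - x‖ := norm_sub_rev _ _
  rw [h1, h2, hqx, Real.norm_eq_abs, mul_pow, sq_abs]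
  field_simp
  ring

/-- boundary case of the adjusted-distance theorem:
If `‖q − x‖ = r` and `⟨q − x, v − x⟩ > 0`, then
`t* = r·‖v − x‖² / (2·⟨q − x, v − x⟩)` is the unique real `t` with
`t = ‖φ(t) − v‖`, where `φ(t) = (t/r)·q + (1 − t/r)·x`. -/
theorem adjusted_distance_boundary_case
    {H : Type*} [NormedAddCommGroup H] [InnerProductSpace ℝ H]
    (q x v : H) (hxv : x ≠ v) (r : ℝ) (hr : 0 < r)
    (hqx : ‖q - x‖ = r) (hpos : 0 < ⟪q - x, v - x⟫) :
    (r * ‖v - x‖ ^ 2 / (2 * ⟪q - x, v - x⟫)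
        = ‖((r * ‖v - x‖ ^ 2 / (2 * ⟪q - x, v - x⟫)) / r) • q
            + (1 - (r * ‖v - x‖ ^ 2 / (2 * ⟪q - x, v - x⟫)) / r) • x - v‖)
      ∧ ∀ t : ℝ, t = ‖(t / r) • q + (1 - t / r) • x - v‖ →
          t = r * ‖v - x‖ ^ 2 / (2 * ⟪q - x, v - x⟫) := by
  set c := ⟪q - x, v - x⟫ with hc
  have hc0 : c ≠ 0 := ne_of_gt hpos
  have hr0 : r ≠ 0 := ne_of_gt hr
  set T : ℝ := r * ‖v - x‖ ^ 2 / (2 * c) with hT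
  have hTnn : 0 ≤ T := by
    apply div_nonneg
    · positivity
    · positivity
  constructor
  · have hsq : T ^ 2 = ‖(T / r) • q + (1 - T / r) • x - v‖ ^ 2 := by
      rw [adjusted_key q x v r hr hqx T, hT]
      field_simp
      ring
    exact (sq_eq_sq₀ hTnn (norm_nonneg _)).mp hsq
  · intro t ht
    have htnn : 0 ≤ t := ht ▸ norm_nonneg _
    have hsq := adjusted_key q x v r hr hqx t
    rw [← ht] at hsq
    have : 2 * t * c / r = ‖v - x‖ ^ 2 := by linarith
    rw [hT, ← this]
    field_simp
end

section
/- Let H be a real inner product space, let q, x, v ∈ H with x ≠ v, let r > 0, and define φ(t) = (t/r)·q + (1 − t/r)·x. Suppose ‖q − x‖ < r, and set u = r·(v − x) / (r² − ‖q − x‖²) and t* = √(⟨u, q − x⟩² + r·⟨u, v − x⟩) − ⟨u, q − x⟩. Then t* > 0, and t* is the unique nonnegative real number t satisfying t = ‖φ(t) − v‖. -/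
open scoped RealInnerProductSpace

/-- interior case of the adjusted-distance theorem:
If `‖q − x‖ < r` and `x ≠ v`, with `u = r·(v − x)/(r² − ‖q − x‖²)` and
`t* = √(⟨u, q − x⟩² + r·⟨u, v − x⟩) − ⟨u, q − x⟩`, then `t* > 0` and `t*` is the
unique nonnegative real `t` with `t = ‖φ(t) − v‖`, where
`φ(t) = (t/r)·q + (1 − t/r)·x`. -/
theorem adjusted_distance_interior_case
    {H : Type*} [NormedAddCommGroup H] [InnerProductSpace ℝ H]
    (q x v : H) (hxv : x ≠ v) (r : ℝ) (hr : 0 < r) (hqx : ‖q - x‖ < r)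
    (u : H) (hu : u = (r / (r ^ 2 - ‖q - x‖ ^ 2)) • (v - x))
    (tstar : ℝ)
    (htstar : tstar = Real.sqrt (⟪u, q - x⟫ ^ 2 + r * ⟪u, v - x⟫)
        - ⟪u, q - x⟫) :
    0 < tstar
      ∧ tstar = ‖(tstar / r) • q + (1 - tstar / r) • x - v‖
      ∧ ∀ t : ℝ, 0 ≤ t → t = ‖(t / r) • q + (1 - t / r) • x - v‖ → t = tstar := by
  have hr' : r ≠ 0 := ne_of_gt hr
  have hvx : v - x ≠ 0 := sub_ne_zero.mpr hxv.symm
  have hc : 0 < ‖v - x‖ ^ 2 := pow_pos (norm_pos_iff.mpr hvx) 2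
  have hD : 0 < r ^ 2 - ‖q - x‖ ^ 2 := by nlinarith [norm_nonneg (q - x)]
  have hD' : r ^ 2 - ‖q - x‖ ^ 2 ≠ 0 := ne_of_gt hD
  set b := ⟪q - x, v - x⟫ with hb
  have hBv : ⟪u, q - x⟫ = r / (r ^ 2 - ‖q - x‖ ^ 2) * b := by
    rw [hu, real_inner_smul_left, real_inner_comm]
  have hCv : ⟪u, v - x⟫ = r / (r ^ 2 - ‖q - x‖ ^ 2) * ‖v - x‖ ^ 2 := by
    rw [hu, real_inner_smul_left, real_inner_self_eq_norm_sq]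
  set B := ⟪u, q - x⟫ with hBdef
  set C := r * ⟪u, v - x⟫ with hCdef
  have hCpos : 0 < C := by
    rw [hCdef, hCv]; exact mul_pos hr (mul_pos (div_pos hr hD) hc)
  have hBD : B * (r ^ 2 - ‖q - x‖ ^ 2) = r * b := by
    rw [hBv]; field_simp
  have hCD : C * (r ^ 2 - ‖q - x‖ ^ 2) = r ^ 2 * ‖v - x‖ ^ 2 := by
    rw [hCdef, hCv]; field_simp
  have hSnn : 0 ≤ B ^ 2 + C := by nlinarith [sq_nonneg B]
  have hsq : Real.sqrt (B ^ 2 + C) ^ 2 = B ^ 2 + C := Real.sq_sqrt hSnn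
  have hsqrt_gt : |B| < Real.sqrt (B ^ 2 + C) := by
    have h1 : Real.sqrt (B ^ 2) < Real.sqrt (B ^ 2 + C) :=
      Real.sqrt_lt_sqrt (sq_nonneg B) (by linarith)
    simpa [Real.sqrt_sq_eq_abs] using h1
  have htpos : 0 < tstar := by
    rw [htstar]; have := le_abs_self B; linarith
  have hquadstar : tstar ^ 2 + 2 * B * tstar - C = 0 := by
    rw [htstar]; linear_combination hsq
  have hexp : ∀ t : ℝ, ‖(t / r) • q + (1 - t / r) • x - v‖ ^ 2 * r ^ 2
      = t ^ 2 * ‖q - x‖ ^ 2 - 2 * t * r * b + r ^ 2 * ‖v - x‖ ^ 2 := by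
    intro t
    have hrw : (t / r) • q + (1 - t / r) • x - v = (t / r) • (q - x) - (v - x) := by
      module
    rw [hrw, norm_sub_sq_real, real_inner_smul_left, norm_smul, Real.norm_eq_abs,
      mul_pow, sq_abs, ← hb]
    field_simp
  -- forward direction: tstar satisfies the equation
  have hsol : ∀ t : ℝ, 0 ≤ t → t ^ 2 + 2 * B * t - C = 0 →
      t = ‖(t / r) • q + (1 - t / r) • x - v‖ := by
    intro t ht hquad
    have h4 : t ^ 2 * ‖q - x‖ ^ 2 - 2 * t * r * b + r ^ 2 * ‖v - x‖ ^ 2 = t ^ 2 * r ^ 2 := by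
      linear_combination (‖q - x‖ ^ 2 - r ^ 2) * hquad + 2 * t * hBD - hCD
    have h2 : ‖(t / r) • q + (1 - t / r) • x - v‖ ^ 2 = t ^ 2 :=
      mul_right_cancel₀ (pow_ne_zero 2 hr') ((hexp t).trans h4)
    calc t = Real.sqrt (t ^ 2) := (Real.sqrt_sq ht).symm
      _ = Real.sqrt (‖(t / r) • q + (1 - t / r) • x - v‖ ^ 2) := by rw [h2]
      _ = _ := Real.sqrt_sq (norm_nonneg _)
  have hneed : ∀ t : ℝ, 0 ≤ t → t = ‖(t / r) • q + (1 - t / r) • x - v‖ →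
      t ^ 2 + 2 * B * t - C = 0 := by
    intro t ht h
    have h5 := hexp t
    rw [← h] at h5
    have h3 : (t ^ 2 + 2 * B * t - C) * (r ^ 2 - ‖q - x‖ ^ 2) = 0 := by
      linear_combination h5 + 2 * t * hBD - hCD
    exact (mul_eq_zero.mp h3).resolve_right hD'
  refine ⟨htpos, hsol tstar htpos.le hquadstar, ?_⟩
  intro t ht h
  have hquad := hneed t ht h
  have hfac : (t - tstar) * (t + tstar + 2 * B) = 0 := by
    linear_combination hquad - hquadstar
  have hpos2 : 0 < tstar + 2 * B := by
    rw [htstar]; have := neg_abs_le B; linarith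
  have : t - tstar = 0 := by
    rcases mul_eq_zero.mp hfac with h1 | h1
    · exact h1
    · linarith
  linarith
end

section
/- Let H be a real inner product space, let q, x, v ∈ H with x ≠ v, let r > 0, and define φ(t) = (t/r)·q + (1 − t/r)·x. If ‖q − x‖ ≤ r and ‖q − v‖ ≤ r, then there exists t with 0 < t ≤ r such that t = ‖φ(t) − v‖. -/
/-- If `x ≠ v`, `‖q − x‖ ≤ r` and `‖q − v‖ ≤ r` for `r > 0`, then
there exists `t` with `0 < t ≤ r` such that `t = ‖φ(t) − v‖`, where
`φ(t) = (t/r)·q + (1 − t/r)·x`. -/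
theorem adjusted_distance_exists
    {H : Type*} [NormedAddCommGroup H] [InnerProductSpace ℝ H]
    (q x v : H) (hxv : x ≠ v) (r : ℝ) (hr : 0 < r)
    (hqx : ‖q - x‖ ≤ r) (hqv : ‖q - v‖ ≤ r) :
    ∃ t : ℝ, 0 < t ∧ t ≤ r ∧ t = ‖(t / r) • q + (1 - t / r) • x - v‖ := by
  set f : ℝ → ℝ := fun t => ‖(t / r) • q + (1 - t / r) • x - v‖ - t with hf
  have hcont : Continuous f := by
    apply Continuous.sub _ continuous_id
    exact (((continuous_id.div_const r).smul continuous_const).add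
      (((continuous_const.sub (continuous_id.div_const r))).smul continuous_const)
      |>.sub continuous_const).norm
  have hf0 : 0 < f 0 := by
    simp only [hf, zero_div, zero_smul, zero_add, sub_zero, one_smul, sub_zero]
    simpa [norm_pos_iff, sub_eq_zero] using hxv
  have hfr : f r ≤ 0 := by
    simp only [hf, div_self hr.ne', one_smul, sub_self, zero_smul, add_zero]
    linarith
  have h0mem : (0:ℝ) ∈ Set.Icc (f r) (f 0) := ⟨hfr, hf0.le⟩
  have := intermediate_value_Icc' hr.le hcont.continuousOn h0mem
  obtain ⟨t, ⟨ht0, htr⟩, hft⟩ := this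
  refine ⟨t, ?_, htr, by simp only [hf] at hft; linarith⟩
  rcases ht0.lt_or_eq with h | h
  · exact h
  · exfalso; rw [← h] at hft; exact hf0.ne' hft
end

section
/- Let H be a real inner product space, let q, x, v ∈ H with x ≠ v, let r > 0, and define φ(t) = (t/r)·q + (1 − t/r)·x. If ‖q − x‖ < r and ‖q − v‖ ≤ r, then the unique nonnegative real number t satisfying t = ‖φ(t) − v‖ satisfies t ≤ r. -/
/-- If `x ≠ v`, `‖q − x‖ < r` and `‖q − v‖ ≤ r`, then the (unique)
nonnegative real `t` with `t = ‖φ(t) − v‖` satisfies `t ≤ r`, where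
`φ(t) = (t/r)·q + (1 − t/r)·x`. -/
theorem adjusted_distance_le_radius
    {H : Type*} [NormedAddCommGroup H] [InnerProductSpace ℝ H]
    (q x v : H) (hxv : x ≠ v) (r : ℝ) (hr : 0 < r)
    (hqx : ‖q - x‖ < r) (hqv : ‖q - v‖ ≤ r) :
    ∀ t : ℝ, 0 ≤ t → t = ‖(t / r) • q + (1 - t / r) • x - v‖ → t ≤ r := by
  intro t ht heq
  by_contra h
  push_neg at h
  have hdiv : 1 < t / r := (one_lt_div hr).2 h
  have h1 : (t / r) • q + (1 - t / r) • x - v = (1 - t / r) • (x - q) + (q - v) := by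
    module
  have h2 : ‖(1 - t / r) • (x - q)‖ = (t / r - 1) * ‖q - x‖ := by
    rw [norm_smul, norm_sub_rev x q, Real.norm_eq_abs, abs_of_neg (by linarith)]
    ring
  have h3 : t ≤ (t / r - 1) * ‖q - x‖ + ‖q - v‖ := by
    calc t = ‖(1 - t / r) • (x - q) + (q - v)‖ := by rw [← h1, ← heq]
    _ ≤ ‖(1 - t / r) • (x - q)‖ + ‖q - v‖ := norm_add_le _ _
    _ = (t / r - 1) * ‖q - x‖ + ‖q - v‖ := by rw [h2]
  have h4 : (t / r - 1) * ‖q - x‖ < (t / r - 1) * r :=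
    mul_lt_mul_of_pos_left hqx (by linarith)
  have h5 : (t / r - 1) * r = t - r := by field_simp
  linarith
end

section
/- Let H be a real Hilbert space, μ a probability measure on H, and for p ∈ H define F_p : ℝ → ℝ by F_p(s) = μ(closed ball of center p and radius s). Let q, x ∈ H, r > 0, and φ(t) = (t/r)·q + (1 − t/r)·x (so φ(r) = q). Suppose there exist δ > 0 and g : [0, r] → ℝ such that: (i) for every t ∈ [0, r] and every s ∈ (0, δ), F_{φ(t)} is differentiable at s and F_{φ(t)}(s) > 0; (ii) as s → 0⁺, the quantities ID_{F_{φ(t)}}(s) := s·F_{φ(t)}′(s)/F_{φ(t)}(s) converge to g(t) uniformly in t ∈ [0, r]; and (iii) g is continuous at t = r. Then lim_{s→0⁺} ID_{F_{φ(r−s)}}(s) = g(r); that is, the local intrinsic dimensionality of the moving-center (interpolated) distance distribution F_{q,x,r} equals the local intrinsic dimensionality ID*_{F_q} = g(r) of the distance distribution centered at q. -/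
open Filter Topology MeasureTheory

/-- The c.d.f. of the distance distribution induced by the probability measure
`μ` relative to the point `p`: `F_p(s) = μ(closedBall p s)`. -/
noncomputable def distCDF {H : Type*} [NormedAddCommGroup H]
    [InnerProductSpace ℝ H] [MeasurableSpace H] (μ : Measure H) (p : H) (s : ℝ) : ℝ :=
  (μ (Metric.closedBall p s)).toReal

/-- interpolation theorem for local intrinsic dimensionality:
under uniform convergence of `ID_{F_{φ(t)}}(s) = s·F_{φ(t)}′(s)/F_{φ(t)}(s)` to
`g(t)` as `s → 0⁺`, uniformly in `t ∈ [0, r]`, and continuity of `g` at `r`,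
the local ID of the moving-center distance distribution equals
`ID*_{F_q} = g(r)`: `lim_{s→0⁺} ID_{F_{φ(r−s)}}(s) = g(r)`. -/
theorem lid_moving_center_interpolation
    {H : Type*} [NormedAddCommGroup H] [InnerProductSpace ℝ H] [CompleteSpace H]
    [MeasurableSpace H] [BorelSpace H]
    (μ : Measure H) [IsProbabilityMeasure μ]
    (q x : H) (r : ℝ) (hr : 0 < r)
    (φ : ℝ → H) (hφ : ∀ t, φ t = (t / r) • q + (1 - t / r) • x)
    (δ : ℝ) (hδ : 0 < δ) (g : ℝ → ℝ)
    (hdiff : ∀ t ∈ Set.Icc (0 : ℝ) r, ∀ s ∈ Set.Ioo (0 : ℝ) δ,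
      DifferentiableAt ℝ (distCDF μ (φ t)) s ∧ 0 < distCDF μ (φ t) s)
    (hunif : TendstoUniformlyOn
      (fun s t => s * deriv (distCDF μ (φ t)) s / distCDF μ (φ t) s)
      g (𝓝[>] (0 : ℝ)) (Set.Icc 0 r))
    (hgcont : ContinuousWithinAt g (Set.Icc 0 r) r) :
    Tendsto
      (fun s => s * deriv (distCDF μ (φ (r - s))) s / distCDF μ (φ (r - s)) s)
      (𝓝[>] (0 : ℝ)) (𝓝 (g r)) := by
  have hmem : ∀ᶠ s in 𝓝[>] (0:ℝ), r - s ∈ Set.Icc 0 r := by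
    filter_upwards [Ioo_mem_nhdsGT_of_mem (Set.mem_Ico.mpr ⟨le_refl (0:ℝ), hr⟩)] with s hs
    exact ⟨by linarith [hs.2], by linarith [hs.1]⟩
  have h1 : Tendsto (fun s => g (r - s)) (𝓝[>] (0:ℝ)) (𝓝 (g r)) := by
    refine hgcont.tendsto.comp ?_
    rw [tendsto_nhdsWithin_iff]
    refine ⟨?_, hmem⟩
    have : Tendsto (fun s : ℝ => r - s) (𝓝 0) (𝓝 r) := by
      have h : Tendsto (fun s : ℝ => r - s) (𝓝 0) (𝓝 (r - 0)) :=
        (continuous_const.sub continuous_id).tendsto (0:ℝ)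
      rwa [sub_zero] at h
    exact this.mono_left nhdsWithin_le_nhds
  rw [Metric.tendsto_nhds]
  intro ε hε
  have h2 := (Metric.tendstoUniformlyOn_iff.mp hunif) (ε/2) (by linarith)
  have h3 := (Metric.tendsto_nhds.mp h1) (ε/2) (by linarith)
  filter_upwards [h2, h3, hmem] with s hs2 hs3 hsm
  calc dist (s * deriv (distCDF μ (φ (r - s))) s / distCDF μ (φ (r - s)) s) (g r)
      ≤ dist (s * deriv (distCDF μ (φ (r - s))) s / distCDF μ (φ (r - s)) s) (g (r - s))
        + dist (g (r - s)) (g r) := dist_triangle _ _ _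
    _ < ε/2 + ε/2 := add_lt_add (by rw [dist_comm]; exact hs2 _ hsm) hs3
    _ = ε := by ring
end
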